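/- For any abelian group A, the natural homomorphism Γ(A) → A/2A, γ(a) ↦ a mod 2A, factors through the natural surjection τ' : Γ(A) → Ψ(A), where Ψ(A) = Ker(A ⊗ A → Λ²(A)) and τ'(γ(a)) = a ⊗ a. -/

import Mathlib

open TensorProduct

def crossEff {A B : Type*} [AddCommGroup A] [AddCommGroup B] (f : A → B) (a b : A) : B :=
  f (a + b) - f a - f b

def IsQuadraticMap {A B : Type*} [AddCommGroup A] [AddCommGroup B] (f : A → B) : Prop :=
  (∀ a₁ a₂ b : A, crossEff f (a₁ + a₂) b = crossEff f a₁ b + crossEff f a₂ b) ∧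
  (∀ a b₁ b₂ : A, crossEff f a (b₁ + b₂) = crossEff f a b₁ + crossEff f a b₂)

def IsHomogQuadraticMap {A B : Type*} [AddCommGroup A] [AddCommGroup B] (f : A → B) : Prop :=
  IsQuadraticMap f ∧ ∀ a : A, f (-a) = f a

def altRel (A : Type*) [AddCommGroup A] : Submodule ℤ (A ⊗[ℤ] A) :=
  Submodule.span ℤ {x | ∃ a : A, a ⊗ₜ[ℤ] a = x}

def LambdaSq (A : Type*) [AddCommGroup A] := (A ⊗[ℤ] A) ⧸ altRel A

noncomputable instance (A : Type*) [AddCommGroup A] : AddCommGroup (LambdaSq A) :=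
  inferInstanceAs (AddCommGroup ((A ⊗[ℤ] A) ⧸ altRel A))

noncomputable def lamProj (A : Type*) [AddCommGroup A] : (A ⊗[ℤ] A) →ₗ[ℤ] LambdaSq A :=
  (altRel A).mkQ

/-- `Ψ(A) = Ker(A ⊗ A → Λ²(A))`. -/
noncomputable def Psi (A : Type*) [AddCommGroup A] : Submodule ℤ (A ⊗[ℤ] A) :=
  LinearMap.ker (lamProj A)

/-- The subgroup `2A` of `A`. -/
def twoA (A : Type*) [AddCommGroup A] : AddSubgroup A :=
  AddMonoidHom.range (AddMonoidHom.id A + AddMonoidHom.id A)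


universe uB

section DiagAux
variable (A : Type*) [AddCommGroup A]

lemma twoA_nsmul_mem (a : A) : (2 : ℕ) • a ∈ twoA A :=
  ⟨a, by simp [two_nsmul]⟩

noncomputable instance modTwoModule : Module (ZMod 2) (A ⧸ twoA A) :=
  QuotientAddGroup.zmodModule (twoA_nsmul_mem A)

/-- The "componentwise product" bilinear form on the `𝔽₂`-vector space `A/2A`,
with respect to a choice of basis.  Its diagonal is the identity. -/
noncomputable def diagBil :
    (A ⧸ twoA A) →ₗ[ZMod 2] (A ⧸ twoA A) →ₗ[ZMod 2] (A ⧸ twoA A) :=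
  (Module.Basis.ofVectorSpace (ZMod 2) (A ⧸ twoA A)).constr (ZMod 2) fun i =>
    ((Module.Basis.ofVectorSpace (ZMod 2) (A ⧸ twoA A)).coord i).smulRight
      (Module.Basis.ofVectorSpace (ZMod 2) (A ⧸ twoA A) i)

lemma diagBil_diag (v : A ⧸ twoA A) : diagBil A v v = v := by
  set b := Module.Basis.ofVectorSpace (ZMod 2) (A ⧸ twoA A) with hb
  have hsq : ∀ c : ZMod 2, c * c = c := by decide
  rw [diagBil, ← hb, Module.Basis.constr_apply, LinearMap.finsupp_sum_apply]
  have key : ∀ i (c : ZMod 2),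
      (c • ((b.coord i).smulRight (b i))) v = (c * b.repr v i) • b i := by
    intro i c
    simp [LinearMap.smulRight_apply, Module.Basis.coord_apply, mul_smul]
  calc ((b.repr v).sum fun i c => (c • ((b.coord i).smulRight (b i))) v)
      = (b.repr v).sum fun i c => c • b i := by
        apply Finsupp.sum_congr
        intro i _
        rw [key i (b.repr v i), hsq]
    _ = v := by
        rw [← Finsupp.linearCombination_apply, b.linearCombination_repr]

/-- A linear map `A ⊗ A → A/2A` sending `a ⊗ a` to `a mod 2A`. -/
noncomputable def diagHom : (A ⊗[ℤ] A) →ₗ[ℤ] A ⧸ twoA A :=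
  TensorProduct.lift
  { toFun := fun a => ((diagBil A (QuotientAddGroup.mk a)).toAddMonoidHom.comp
      (QuotientAddGroup.mk' (twoA A))).toIntLinearMap
    map_add' := by
      intro a b
      ext c
      simp [QuotientAddGroup.mk_add, map_add]
    map_smul' := by
      intro n a
      ext c
      simp [QuotientAddGroup.mk_zsmul, map_zsmul] }

lemma diagHom_diag (a : A) :
    diagHom A (a ⊗ₜ[ℤ] a) = QuotientAddGroup.mk a := by
  simp only [diagHom, TensorProduct.lift.tmul]
  exact (TensorProduct.lift.tmul a a).trans (diagBil_diag A (QuotientAddGroup.mk a))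

end DiagAux

/-- The image of `γ` generates `Γ(A)`, as a consequence of the uniqueness part of
the universal property. -/
lemma gamma_generates {A G : Type*} [AddCommGroup A] [AddCommGroup G]
    (γ : A → G)
    (hγuniv : ∀ (B : Type uB) [AddCommGroup B] (f : A → B), IsHomogQuadraticMap f →
      ∃! h : G →+ B, ∀ a : A, f a = h (γ a)) :
    AddSubgroup.closure (Set.range γ) = ⊤ := by
  by_contra hne
  set H := AddSubgroup.closure (Set.range γ) with hH
  obtain ⟨x, hx⟩ : ∃ x : G, x ∉ H := by
    by_contra h
    push_neg at h
    exact hne (AddSubgroup.eq_top_iff' H |>.2 h)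
  have hx0 : (QuotientAddGroup.mk x : G ⧸ H) ≠ 0 := by
    simpa [QuotientAddGroup.eq_zero_iff] using hx
  obtain ⟨c, hc⟩ := CharacterModule.exists_character_apply_ne_zero_of_ne_zero hx0
  let h₁ : G →+ ULift.{uB} (AddCircle (1 : ℚ)) :=
    AddMonoidHom.mk' (fun g => ULift.up (c (QuotientAddGroup.mk g)))
      (by
        intro a b
        have : (QuotientAddGroup.mk (a + b) : G ⧸ H)
            = QuotientAddGroup.mk a + QuotientAddGroup.mk b := rfl
        simp [this, map_add]
        rfl)
  have hf0 : IsHomogQuadraticMap (fun _ : A => (0 : ULift.{uB} (AddCircle (1 : ℚ)))) := by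
    refine ⟨⟨fun _ _ _ => ?_, fun _ _ _ => ?_⟩, fun _ => rfl⟩ <;> simp [crossEff]
  obtain ⟨h, _, huniq⟩ := hγuniv (ULift.{uB} (AddCircle (1 : ℚ))) _ hf0
  have hmem : ∀ a : A, γ a ∈ H := fun a =>
    AddSubgroup.subset_closure (Set.mem_range_self a)
  have h1 : h₁ = h := by
    apply huniq
    intro a
    have : (QuotientAddGroup.mk (γ a) : G ⧸ H) = 0 :=
      (QuotientAddGroup.eq_zero_iff _).2 (hmem a)
    show (0 : ULift.{uB} (AddCircle (1 : ℚ))) = ULift.up (c (QuotientAddGroup.mk (γ a)))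
    rw [this, map_zero]
    rfl
  have h0 : (0 : G →+ ULift.{uB} (AddCircle (1 : ℚ))) = h := by
    apply huniq
    intro a
    rfl
  have : h₁ x = 0 := by rw [h1, ← h0]; rfl
  exact hc (congrArg ULift.down this)

lemma mkQuot_homogQuad (A : Type*) [AddCommGroup A] :
    IsHomogQuadraticMap (fun a : A => (QuotientAddGroup.mk a : A ⧸ twoA A)) := by
  have hadd : ∀ x y : A,
      (QuotientAddGroup.mk (x + y) : A ⧸ twoA A)
        = QuotientAddGroup.mk x + QuotientAddGroup.mk y := fun _ _ => rfl
  have hce : ∀ x y : A,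
      crossEff (fun a : A => (QuotientAddGroup.mk a : A ⧸ twoA A)) x y = 0 := by
    intro x y
    simp [crossEff, hadd]
  refine ⟨⟨fun a₁ a₂ b => ?_, fun a b₁ b₂ => ?_⟩, fun a => ?_⟩
  · simp [hce]
  · simp [hce]
  · have h2 : (QuotientAddGroup.mk a : A ⧸ twoA A) + QuotientAddGroup.mk a = 0 := by
      simpa [two_nsmul] using
        (QuotientAddGroup.eq_zero_iff (2 • a)).2 (twoA_nsmul_mem A a)
    show (QuotientAddGroup.mk (-a) : A ⧸ twoA A) = QuotientAddGroup.mk a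
    have hneg : (QuotientAddGroup.mk (-a) : A ⧸ twoA A) = -QuotientAddGroup.mk a := rfl
    rw [hneg, neg_eq_of_add_eq_zero_left h2]

/-- the natural homomorphism `Γ(A) → A/2A`, `γ(a) ↦ a mod 2A`, factors
through the natural surjection `τ' : Γ(A) → Ψ(A)`, `γ(a) ↦ a ⊗ a`. -/
theorem gamma_to_mod_two_factors {A G : Type*} [AddCommGroup A] [AddCommGroup G]
    (γ : A → G) (hγ : IsHomogQuadraticMap γ)
    (hγuniv : ∀ (B : Type*) [AddCommGroup B] (f : A → B), IsHomogQuadraticMap f →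
      ∃! h : G →+ B, ∀ a : A, f a = h (γ a))
    (τ' : G →+ ↥(Psi A)) (hτ' : ∀ a : A, (τ' (γ a) : A ⊗[ℤ] A) = a ⊗ₜ[ℤ] a)
    (hsurj : Function.Surjective τ')
    (d : G →+ A ⧸ twoA A) (hd : ∀ a : A, d (γ a) = QuotientAddGroup.mk a) :
    ∃ φ : ↥(Psi A) →+ A ⧸ twoA A, ∀ x : G, φ (τ' x) = d x := by

  set φ : ↥(Psi A) →+ A ⧸ twoA A :=
    (diagHom A).toAddMonoidHom.comp ((Psi A).subtype.toAddMonoidHom) with hφ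
  refine ⟨φ, ?_⟩
  have hagree : ∀ a : A, φ (τ' (γ a)) = d (γ a) := by
    intro a
    have h1 : φ (τ' (γ a)) = diagHom A ((τ' (γ a) : A ⊗[ℤ] A)) := rfl
    rw [h1, hτ' a, diagHom_diag, hd]
  have hgen := gamma_generates γ hγuniv
  intro x
  have hx : x ∈ AddSubgroup.closure (Set.range γ) := hgen ▸ AddSubgroup.mem_top x
  refine AddSubgroup.closure_induction
    (p := fun g _ => φ (τ' g) = d g) ?_ ?_ ?_ ?_ hx
  · rintro g ⟨a, rfl⟩
    exact hagree a
  · simp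
  · intro g₁ g₂ _ _ ih₁ ih₂
    simp [map_add, ih₁, ih₂]
  · intro g _ ih
    simp [map_neg, ih]
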